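/- Each assignment block for variable i in the Takenaga–Walsh reduction admits exactly two internal orderings of its four tiles consistent with horizontal matching: one producing the vertical output signal (i, −i) (interpreted as i = true) and one producing (−i, i) (interpreted as i = false). -/

import Mathlib

/-- Edge labels: integers plus the special boundary markers `top`, `left`, `right`. -/
inductive Lab where
  | num : ℤ → Lab
  | top : Lab
  | left : Lab
  | right : Lab
deriving DecidableEq

/-- A Tetravex tile: labels on its top, right, bottom and left edges. -/
structure Tile where
  top : Lab
  right : Lab
  bottom : Lab
  left : Lab
deriving DecidableEq

/-- A placement on an `h × w` board (first index = row, second = column) is proper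
if horizontally adjacent tiles agree on the shared vertical edge and vertically
adjacent tiles agree on the shared horizontal edge. -/
def IsProper (h w : ℕ) (p : Fin h → Fin w → Tile) : Prop :=
  (∀ (i : Fin h) (j j' : Fin w), (j' : ℕ) = (j : ℕ) + 1 → (p i j).right = (p i j').left) ∧
  (∀ (i i' : Fin h) (j : Fin w), (i' : ℕ) = (i : ℕ) + 1 → (p i j).bottom = (p i' j).top)

/-- The multiset of tiles used by a placement. -/
def TilesOf (h w : ℕ) (p : Fin h → Fin w → Tile) : Multiset Tile :=
  (Finset.univ : Finset (Fin h × Fin w)).val.map fun q => p q.1 q.2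

/-- A multiset of tiles admits a proper tiling of an `h × w` board. -/
def Tileable (h w : ℕ) (T : Multiset Tile) : Prop :=
  ∃ p : Fin h → Fin w → Tile, TilesOf h w p = T ∧ IsProper h w p

/-- The four assignment tiles of variable `i`, in the `true` configuration order. -/
def aList (i : ℤ) : List Tile :=
  [⟨.top, .num i, .num 0, .num (i - 1)⟩, ⟨.top, .num i, .num i, .num i⟩,
   ⟨.top, .num i, .num (-i), .num i⟩, ⟨.top, .num (i + 1), .num 0, .num i⟩]

/-- The four assignment tiles of variable `i`, in the `false` configuration order. -/
def aListF (i : ℤ) : List Tile :=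
  [⟨.top, .num i, .num 0, .num (i - 1)⟩, ⟨.top, .num i, .num (-i), .num i⟩,
   ⟨.top, .num i, .num i, .num i⟩, ⟨.top, .num (i + 1), .num 0, .num i⟩]

/-- A horizontal ordering of tiles is valid for variable `i` if consecutive
right/left labels match and the outer left and right labels are `i-1` and `i+1`. -/
def ValidOrder (i : ℤ) (l : List Tile) : Prop :=
  List.Chain' (fun s t => s.right = t.left) l ∧
  l.head?.map Tile.left = some (Lab.num (i - 1)) ∧
  l.getLast?.map Tile.right = some (Lab.num (i + 1))

set_option maxHeartbeats 2000000 in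
/-- **The assignment block has exactly two consistent internal orderings**: for
`i ≥ 1`, an ordering of the four assignment tiles of variable `i` is consistent
with horizontal matching iff it is the `true` configuration — whose output
signal (the bottom labels of the two middle tiles) is `(i, -i)` — or the
`false` configuration, whose output signal is `(-i, i)`. -/
theorem assignment_block_two_orderings (i : ℤ) (hi : 1 ≤ i) :
    (∀ l : List Tile, l.Perm (aList i) →
      (ValidOrder i l ↔ l = aList i ∨ l = aListF i)) ∧
    (aList i).map Tile.bottom = [.num 0, .num i, .num (-i), .num 0] ∧
    (aListF i).map Tile.bottom = [.num 0, .num (-i), .num i, .num 0] := by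
  refine ⟨?_, rfl, rfl⟩
  intro l hl
  have hnd : l.Nodup := hl.nodup_iff.mpr (by simp [aList]; omega)
  obtain ⟨a, b, c, d, rfl⟩ : ∃ a b c d, l = [a, b, c, d] := by
    have h := hl.length_eq
    simp only [aList, List.length_cons, List.length_nil] at h
    rcases l with _|⟨a,_|⟨b,_|⟨c,_|⟨d,_|⟨e,t⟩⟩⟩⟩⟩ <;>
      first
      | exact ⟨_, _, _, _, rfl⟩
      | (simp only [List.length_cons, List.length_nil] at h; omega)
  have ha : a ∈ aList i := hl.subset (by simp)
  have hb : b ∈ aList i := hl.subset (by simp)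
  have hc : c ∈ aList i := hl.subset (by simp)
  have hd : d ∈ aList i := hl.subset (by simp)
  simp only [aList, List.mem_cons, List.not_mem_nil, or_false] at ha hb hc hd
  simp only [List.nodup_cons, List.mem_cons, List.not_mem_nil, or_false,
    List.nodup_nil, and_true, not_or] at hnd
  clear hl
  rcases ha with rfl|rfl|rfl|rfl <;> rcases hb with rfl|rfl|rfl|rfl <;>
    rcases hc with rfl|rfl|rfl|rfl <;> rcases hd with rfl|rfl|rfl|rfl <;>
    simp_all [ValidOrder, List.Chain', aList, aListF, Tile.mk.injEq, Lab.num.injEq] <;> omega
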